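/- arXiv:1207.6083 — 6 statements merged into one kernel-verified Lean document; each statement's English description precedes it below -/
import Mathlib

section
/- For any positive semidefinite N×N real symmetric matrix L and any subset A ⊆ {1,...,N}, the sum of det(L_Y) over all Y with A ⊆ Y ⊆ {1,...,N} equals det(L + I_{Ā}), where L_Y is the principal submatrix of L indexed by Y and I_{Ā} is the diagonal matrix with ones in positions corresponding to the complement of A and zeros elsewhere. -/
open Matrix BigOperators

/-- The principal minor of `L` indexed by the subset `A`. -/
noncomputable def principalMinor {N : ℕ} (L : Matrix (Fin N) (Fin N) ℝ)
    (A : Finset (Fin N)) : ℝ :=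
  (L.submatrix (fun i : A => (i : Fin N)) (fun j : A => (j : Fin N))).det

lemma det_piecewise_one {N : ℕ} (L : Matrix (Fin N) (Fin N) ℝ) (S : Finset (Fin N)) :
    Matrix.det (S.piecewise L (1 : Matrix (Fin N) (Fin N) ℝ)) = principalMinor L S := by
  classical
  have hM : (S.piecewise L (1 : Matrix (Fin N) (Fin N) ℝ)) = (S.piecewise L (1 : Matrix (Fin N) (Fin N) ℝ)) := rfl
  rw [← Matrix.det_submatrix_equiv_self (Equiv.sumCompl (· ∈ S)) (S.piecewise L (1 : Matrix (Fin N) (Fin N) ℝ))]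
  have hblock : Matrix.submatrix (S.piecewise L (1 : Matrix (Fin N) (Fin N) ℝ)) (Equiv.sumCompl (· ∈ S)) (Equiv.sumCompl (· ∈ S)) =
      Matrix.fromBlocks
        (L.submatrix (fun i : S => (i : Fin N)) (fun j : S => (j : Fin N)))
        (L.submatrix (fun i : S => (i : Fin N)) (fun j : {x // x ∉ S} => (j : Fin N)))
        0 1 := by
    ext i j
    cases i with
    | inl i =>
      cases j with
      | inl j =>
        simp [hM, Matrix.submatrix, Finset.piecewise, i.2]
      | inr j =>
        simp [hM, Matrix.submatrix, Finset.piecewise, i.2]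
    | inr i =>
      cases j with
      | inl j =>
        have : (i : Fin N) ≠ (j : Fin N) := by
          intro h
          exact i.2 (h ▸ j.2)
        simp [hM, Matrix.submatrix, Finset.piecewise, i.2, Matrix.one_apply, this]
      | inr j =>
        have : ((i : Fin N) = (j : Fin N)) ↔ i = j := Subtype.ext_iff.symm
        simp [hM, Matrix.submatrix, Finset.piecewise, i.2, Matrix.one_apply, this]
  rw [hblock, Matrix.det_fromBlocks_zero₂₁, Matrix.det_one, mul_one]
  rfl

theorem stmt_0 {N : ℕ} (L : Matrix (Fin N) (Fin N) ℝ) (hL : L.PosSemidef)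
    (A : Finset (Fin N)) :
    ∑ Y ∈ Finset.univ.filter (fun Y : Finset (Fin N) => A ⊆ Y),
        principalMinor L Y =
      (L + Matrix.diagonal (fun i => if i ∈ A then (0 : ℝ) else 1)).det := by
  classical
  set d : Fin N → ℝ := fun i => if i ∈ A then (0 : ℝ) else 1 with hd
  have hdet : (L + Matrix.diagonal d).det =
      ∑ S : Finset (Fin N), (Matrix.detRowAlternating (S.piecewise L (Matrix.diagonal d)) : ℝ) := by
    have := (Matrix.detRowAlternating :
        (Fin N → ℝ) [⋀^Fin N]→ₗ[ℝ] ℝ).toMultilinearMap.map_add_univ L (Matrix.diagonal d)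
    exact this
  rw [hdet]
  rw [← Finset.sum_filter_add_sum_filter_not Finset.univ
      (fun S : Finset (Fin N) => A ⊆ S)]
  have h2 : ∑ S ∈ Finset.univ.filter (fun S : Finset (Fin N) => ¬ A ⊆ S),
      (Matrix.detRowAlternating (S.piecewise L (Matrix.diagonal d)) : ℝ) = 0 := by
    apply Finset.sum_eq_zero
    intro S hS
    simp only [Finset.mem_filter, Finset.not_subset] at hS
    obtain ⟨i, hiA, hiS⟩ := hS.2
    have : Matrix.detRowAlternating (S.piecewise L (Matrix.diagonal d)) =
        Matrix.det (S.piecewise L (Matrix.diagonal d)) := rfl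
    rw [this]
    apply Matrix.det_eq_zero_of_row_eq_zero i
    intro j
    have hrow : (S.piecewise L (Matrix.diagonal d)) i = Matrix.diagonal d i :=
      Finset.piecewise_eq_of_notMem _ _ _ hiS
    rw [hrow]
    simp [Matrix.diagonal, hd, hiA]
  rw [h2, add_zero]
  apply Finset.sum_congr rfl
  intro S hS
  simp only [Finset.mem_filter] at hS
  have heq : S.piecewise L (Matrix.diagonal d) = S.piecewise L (1 : Matrix (Fin N) (Fin N) ℝ) := by
    ext i j
    by_cases hi : i ∈ S
    · exact (congrFun (Finset.piecewise_eq_of_mem _ _ _ hi) j).trans (congrFun (Finset.piecewise_eq_of_mem _ _ _ hi) j).symm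
    · have hiA : i ∉ A := fun h => hi (hS.2 h)
      exact (congrFun (Finset.piecewise_eq_of_notMem _ _ _ hi) j).trans ((by simp [Matrix.diagonal, Matrix.one_apply, hd, hiA] : Matrix.diagonal d i j = (1 : Matrix (Fin N) (Fin N) ℝ) i j).trans (congrFun (Finset.piecewise_eq_of_notMem _ _ _ hi) j).symm)
  rw [heq]
  exact (det_piecewise_one L S).symm ▸ (det_piecewise_one L S)
end

section
/- An L-ensemble is a determinantal point process: if P(Y) = det(L_Y)/det(L+I) for a positive semidefinite matrix L, then for every A ⊆ {1,...,N}, the probability that A ⊆ Y when Y is drawn from P equals det(K_A), where K = L(L+I)^{-1} = I - (L+I)^{-1}. -/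
open Matrix BigOperators

lemma principalMinor_congr {N : ℕ} {M M' : Matrix (Fin N) (Fin N) ℝ}
    {A : Finset (Fin N)} (h : ∀ i ∈ A, ∀ j ∈ A, M i j = M' i j) :
    principalMinor M A = principalMinor M' A := by
  unfold principalMinor
  congr 1
  ext i j
  exact h i i.2 j j.2

/-- If the rows of `M` outside `S` are standard basis rows, then the determinant of `M`
equals the principal minor on `S`. -/
lemma det_eq_principalMinor_of_rows {N : ℕ} (M : Matrix (Fin N) (Fin N) ℝ)
    (S : Finset (Fin N))
    (h : ∀ i ∉ S, ∀ j, M i j = if i = j then 1 else 0) :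
    M.det = principalMinor M S := by
  classical
  let e : {x : Fin N // x ∈ S} ⊕ {x : Fin N // x ∉ S} ≃ Fin N :=
    Equiv.sumCompl (· ∈ S)
  rw [← Matrix.det_submatrix_equiv_self e M]
  have he : M.submatrix e e = Matrix.fromBlocks
      (M.submatrix (fun i : {x : Fin N // x ∈ S} => (i : Fin N))
        (fun j : {x : Fin N // x ∈ S} => (j : Fin N)))
      (M.submatrix (fun i : {x : Fin N // x ∈ S} => (i : Fin N))
        (fun j : {x : Fin N // x ∉ S} => (j : Fin N)))
      0 1 := by
    ext i j
    cases i with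
    | inl i =>
      cases j with
      | inl j => rfl
      | inr j => rfl
    | inr i =>
      cases j with
      | inl j =>
        have hij : (i : Fin N) ≠ (j : Fin N) := by
          intro hEq
          exact i.2 (hEq ▸ j.2)
        simp only [Matrix.submatrix_apply, Matrix.fromBlocks_apply₂₁,
          Matrix.zero_apply]
        show M (e (Sum.inr i)) (e (Sum.inl j)) = 0
        have : e (Sum.inr i) = (i : Fin N) := rfl
        have : e (Sum.inl j) = (j : Fin N) := rfl
        show M (i : Fin N) (j : Fin N) = 0
        rw [h _ i.2, if_neg hij]
      | inr j =>
        show M (i : Fin N) (j : Fin N) = (1 : Matrix _ _ ℝ) i j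
        rw [h _ i.2, Matrix.one_apply]
        by_cases hij : i = j
        · simp [hij]
        · have : (i : Fin N) ≠ (j : Fin N) := fun hEq => hij (Subtype.ext hEq)
          simp [hij, this]
  rw [he, Matrix.det_fromBlocks_zero₂₁, Matrix.det_one, mul_one]
  rfl

/-- Column version. -/
lemma det_eq_principalMinor_of_cols {N : ℕ} (M : Matrix (Fin N) (Fin N) ℝ)
    (S : Finset (Fin N))
    (h : ∀ j ∉ S, ∀ i, M i j = if i = j then 1 else 0) :
    M.det = principalMinor M S := by
  rw [← Matrix.det_transpose M]
  rw [det_eq_principalMinor_of_rows Mᵀ S (by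
    intro i hi j
    rw [Matrix.transpose_apply, h i hi j]
    simp [eq_comm])]
  unfold principalMinor
  rw [← Matrix.transpose_submatrix, Matrix.det_transpose]

/-- Expansion of `det (L + diagonal d)` with `d` the indicator of `Aᶜ` as a sum of
principal minors over supersets of `A`. -/
lemma det_add_indicator {N : ℕ} (L : Matrix (Fin N) (Fin N) ℝ) (A : Finset (Fin N)) :
    (L + Matrix.diagonal (fun i => if i ∈ A then (0 : ℝ) else 1)).det =
      ∑ Y ∈ Finset.univ.filter (fun Y : Finset (Fin N) => A ⊆ Y),
        principalMinor L Y := by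
  classical
  set d : Fin N → ℝ := fun i => if i ∈ A then (0 : ℝ) else 1 with hd
  have hexp : (L + Matrix.diagonal d).det =
      ∑ S : Finset (Fin N),
        Matrix.det (S.piecewise (fun i => L i) (fun i => Matrix.diagonal d i)) := by
    exact (Matrix.detRowAlternating :
      (Fin N → ℝ) [⋀^Fin N]→ₗ[ℝ] ℝ).toMultilinearMap.map_add_univ
        (fun i => L i) (fun i => Matrix.diagonal d i)
  rw [hexp, Finset.sum_filter]
  refine Finset.sum_congr rfl fun S _ => ?_
  by_cases hAS : A ⊆ S
  · rw [if_pos hAS]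
    have hrows : ∀ i ∉ S, ∀ j,
        (S.piecewise (fun i => L i) (fun i => Matrix.diagonal d i)) i j =
          if i = j then 1 else 0 := by
      intro i hi j
      rw [Finset.piecewise_eq_of_notMem _ _ _ hi]
      have hiA : i ∉ A := fun hiA => hi (hAS hiA)
      simp only [Matrix.diagonal_apply, hd]
      by_cases hij : i = j
      · subst hij; simp [hiA]
      · simp [hij]
    rw [det_eq_principalMinor_of_rows _ S hrows]
    apply principalMinor_congr
    intro i hi j _
    show (S.piecewise (fun i => L i) (fun i => Matrix.diagonal d i)) i j = L i j
    rw [Finset.piecewise_eq_of_mem _ _ _ hi]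
  · rw [if_neg hAS]
    obtain ⟨a, haA, haS⟩ := Finset.not_subset.mp hAS
    apply Matrix.det_eq_zero_of_row_eq_zero a
    intro j
    show (S.piecewise (fun i => L i) (fun i => Matrix.diagonal d i)) a j = 0
    rw [Finset.piecewise_eq_of_notMem _ _ _ haS]
    simp only [Matrix.diagonal_apply, hd]
    by_cases haj : a = j
    · subst haj; simp [haA]
    · simp [haj]

theorem stmt_2 {N : ℕ} (L : Matrix (Fin N) (Fin N) ℝ) (hL : L.PosSemidef)
    (A : Finset (Fin N)) :
    (∑ Y ∈ Finset.univ.filter (fun Y : Finset (Fin N) => A ⊆ Y),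
        principalMinor L Y / (L + 1).det) =
      principalMinor (L * (L + 1)⁻¹) A ∧
    L * (L + 1)⁻¹ = 1 - (L + 1)⁻¹ := by
  classical
  have hone : (1 : Matrix (Fin N) (Fin N) ℝ).PosDef := by
    rw [show (1 : Matrix (Fin N) (Fin N) ℝ) = Matrix.diagonal (fun _ => (1 : ℝ)) by
      simp]
    exact Matrix.posDef_diagonal_iff.mpr (fun _ => one_pos)
  have hpd : (L + 1).PosDef := Matrix.PosDef.posSemidef_add hL hone
  have hdet_pos : 0 < (L + 1).det := hpd.det_pos
  have hdet_ne : (L + 1).det ≠ 0 := hdet_pos.ne'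
  have hunit : IsUnit (L + 1).det := hdet_ne.isUnit
  have hinv : (L + 1) * (L + 1)⁻¹ = 1 := Matrix.mul_nonsing_inv _ hunit
  have hK : L * (L + 1)⁻¹ = 1 - (L + 1)⁻¹ := by
    have h1 : L * (L + 1)⁻¹ = ((L + 1) - 1) * (L + 1)⁻¹ := by
      congr 1
      abel
    rw [h1, Matrix.sub_mul, hinv, Matrix.one_mul]
  refine ⟨?_, hK⟩
  -- the matrices involved
  set M : Matrix (Fin N) (Fin N) ℝ := (L + 1)⁻¹ with hM
  set E : Matrix (Fin N) (Fin N) ℝ :=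
    Matrix.diagonal (fun i => if i ∈ A then (1 : ℝ) else 0) with hE
  have hfact : L + Matrix.diagonal (fun i => if i ∈ A then (0 : ℝ) else 1) =
      (L + 1) * (1 - M * E) := by
    rw [Matrix.mul_sub, Matrix.mul_one, ← Matrix.mul_assoc, hinv, Matrix.one_mul]
    have h1E : Matrix.diagonal (fun i => if i ∈ A then (0 : ℝ) else 1) = 1 - E := by
      ext i j
      rw [hE]
      by_cases hij : i = j
      · subst hij
        by_cases hi : i ∈ A <;>
          simp [Matrix.diagonal_apply, Matrix.one_apply, hi]
      · simp [Matrix.diagonal_apply, Matrix.one_apply, hij]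
    rw [h1E]
    abel
  have hcols : ∀ j ∉ A, ∀ i, (1 - M * E) i j = if i = j then 1 else 0 := by
    intro j hj i
    have hME : (M * E) i j = 0 := by
      rw [Matrix.mul_apply]
      apply Finset.sum_eq_zero
      intro k _
      rw [hE, Matrix.diagonal_apply]
      by_cases hkj : k = j
      · simp [hkj, hj]
      · simp [hkj]
    rw [Matrix.sub_apply, hME, sub_zero, Matrix.one_apply]
  have hdetME : (1 - M * E).det = principalMinor (1 - M * E) A :=
    det_eq_principalMinor_of_cols _ A hcols
  have hpm : principalMinor (1 - M * E) A = principalMinor (L * (L + 1)⁻¹) A := by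
    rw [hK]
    apply principalMinor_congr
    intro i _ j hj
    rw [Matrix.sub_apply, Matrix.sub_apply]
    congr 1
    rw [Matrix.mul_apply]
    rw [show M i j = ∑ k, M i k * (if k = j then (1:ℝ) else 0) by
      simp [Finset.sum_ite_eq]]
    refine Finset.sum_congr rfl fun k _ => ?_
    rw [hE, Matrix.diagonal_apply]
    by_cases hkj : k = j <;> simp [hkj, hj]
  have hmain : ∑ Y ∈ Finset.univ.filter (fun Y : Finset (Fin N) => A ⊆ Y),
      principalMinor L Y = (L + 1).det * principalMinor (L * (L + 1)⁻¹) A := by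
    rw [← det_add_indicator L A, hfact, Matrix.det_mul, hdetME, hpm]
  rw [← Finset.sum_div, hmain, mul_div_cancel_left₀ _ hdet_ne]
end

section
/- Mixture decomposition of a DPP: if L = Σ_{n=1}^N λ_n v_n v_n^T is an orthonormal eigendecomposition of a positive semidefinite matrix, then the L-ensemble P_L equals (1/det(L+I)) Σ_{J ⊆ {1,...,N}} P^{V_J} · Π_{n∈J} λ_n, where P^{V_J} is the determinantal process with projection marginal kernel K^{V_J} = Σ_{n∈J} v_n v_n^T; equivalently the two distributions agree on all marginals det(K_A). -/
open Matrix BigOperators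

open Classical in
noncomputable def dcoef {N : ℕ} (v : Fin N → Fin N → ℝ) (A : Finset (Fin N))
    (S : Finset (Fin N)) : ℝ :=
  ∑ r ∈ Finset.univ.filter
      (fun r : A → Fin N => Function.Injective r ∧ Finset.image r Finset.univ = S),
    (∏ a : A, v (r a) (a : Fin N)) * (Matrix.of (fun a b : A => v (r a) (b : Fin N))).det

lemma expand {N : ℕ} (v : Fin N → Fin N → ℝ) (A : Finset (Fin N)) (c : Fin N → ℝ) :
    principalMinor (∑ n, c n • vecMulVec (v n) (v n)) A
      = ∑ S : Finset (Fin N), (∏ n ∈ S, c n) * dcoef v A S := by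
  classical
  unfold principalMinor
  have hM : ((∑ n, c n • vecMulVec (v n) (v n)).submatrix
        (fun i : A => (i : Fin N)) (fun j : A => (j : Fin N)))
      = fun a : A => ∑ n, (c n * v n (a : Fin N)) • (fun b : A => v n (b : Fin N)) := by
    ext a b
    simp [Matrix.sum_apply, vecMulVec_apply, Finset.sum_apply, mul_assoc]
  rw [hM]
  have hdet : ∀ r : A → Fin N,
      (Matrix.detRowAlternating (R := ℝ) (n := A)).toMultilinearMap
          (fun a : A => (fun b : A => v (r a) (b : Fin N)))
        = (Matrix.of (fun a b : A => v (r a) (b : Fin N))).det := fun _ => rfl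
  have h1 : (Matrix.det (fun a : A => ∑ n, (c n * v n (a : Fin N)) • (fun b : A => v n (b : Fin N))))
      = (Matrix.detRowAlternating (R := ℝ) (n := A)).toMultilinearMap
          (fun a : A => ∑ n, (c n * v n (a : Fin N)) • (fun b : A => v n (b : Fin N))) := rfl
  rw [h1, MultilinearMap.map_sum]
  have h2 : ∀ r : A → Fin N,
      (Matrix.detRowAlternating (R := ℝ) (n := A)).toMultilinearMap
          (fun a : A => (c (r a) * v (r a) (a : Fin N)) • (fun b : A => v (r a) (b : Fin N)))
        = (∏ a : A, c (r a) * v (r a) (a : Fin N))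
            * (Matrix.of (fun a b : A => v (r a) (b : Fin N))).det := by
    intro r
    rw [MultilinearMap.map_smul_univ, smul_eq_mul, hdet]
  simp_rw [h2]
  -- drop non-injective r
  rw [← Finset.sum_filter_add_sum_filter_not Finset.univ
        (fun r : A → Fin N => Function.Injective r)]
  have hzero : ∑ r ∈ Finset.univ.filter
        (fun r : A → Fin N => ¬ Function.Injective r),
      (∏ a : A, c (r a) * v (r a) (a : Fin N))
        * (Matrix.of (fun a b : A => v (r a) (b : Fin N))).det = 0 := by
    refine Finset.sum_eq_zero fun r hr => ?_
    simp only [Finset.mem_filter] at hr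
    obtain ⟨a, b, hab, hne⟩ : ∃ a b, r a = r b ∧ a ≠ b := by
      simpa [Function.Injective] using hr.2
    have : (Matrix.of (fun a b : A => v (r a) (b : Fin N))).det = 0 := by
      refine Matrix.det_zero_of_row_eq hne ?_
      funext x; simp [hab]
    rw [this, mul_zero]
  rw [hzero, add_zero]
  -- fiber by image
  rw [← Finset.sum_fiberwise_of_maps_to
        (g := fun r : A → Fin N => Finset.image r Finset.univ)
        (t := (Finset.univ : Finset (Finset (Fin N))))
        (fun r _ => Finset.mem_univ _)]
  refine Finset.sum_congr rfl fun S _ => ?_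
  rw [dcoef, Finset.mul_sum, Finset.filter_filter]
  refine Finset.sum_congr (by congr 1) fun r hr => ?_
  simp only [Finset.mem_filter] at hr
  have hinj : Function.Injective r := hr.2.1
  have himg : Finset.image r Finset.univ = S := hr.2.2
  have : ∏ a : A, c (r a) = ∏ n ∈ S, c n := by
    rw [← himg, Finset.prod_image (fun x _ y _ h => hinj h)]
  rw [Finset.prod_mul_distrib, this, mul_assoc]

lemma conj {N : ℕ} (v : Fin N → Fin N → ℝ) (c : Fin N → ℝ) :
    (Matrix.of v)ᵀ * Matrix.diagonal c * (Matrix.of v)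
      = ∑ n, c n • vecMulVec (v n) (v n) := by
  ext i j
  rw [Matrix.mul_apply]
  simp only [Matrix.mul_diagonal, Matrix.transpose_apply, Matrix.of_apply,
    Matrix.sum_apply, Matrix.smul_apply, vecMulVec_apply, smul_eq_mul]
  exact Finset.sum_congr rfl fun k _ => by ring

lemma sum_supersets {N : ℕ} (lam : Fin N → ℝ) (S : Finset (Fin N)) :
    ∑ J : Finset (Fin N), (if S ⊆ J then (∏ n ∈ J, lam n) else 0)
      = (∏ n ∈ S, lam n) * ∏ n ∈ Sᶜ, (lam n + 1) := by
  classical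
  rw [Finset.sum_ite, Finset.sum_const_zero, add_zero]
  have hbij : ∑ J ∈ Finset.univ.filter (fun J => S ⊆ J), ∏ n ∈ J, lam n
      = ∑ t ∈ Sᶜ.powerset, (∏ n ∈ S, lam n) * ∏ n ∈ t, lam n := by
    refine Finset.sum_nbij' (i := fun J => J \ S) (j := fun t => S ∪ t) ?_ ?_ ?_ ?_ ?_
    · intro J hJ
      rw [Finset.mem_powerset]
      intro x hx
      simp only [Finset.mem_sdiff] at hx
      simpa [Finset.mem_compl] using hx.2
    · intro t ht
      simp [Finset.subset_union_left]
    · intro J hJ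
      simp only [Finset.mem_filter] at hJ
      exact Finset.union_sdiff_of_subset hJ.2
    · intro t ht
      rw [Finset.mem_powerset] at ht
      refine Finset.union_sdiff_cancel_left ?_
      exact Finset.disjoint_left.mpr fun a haS hat => by
        have := ht hat; simp [Finset.mem_compl] at this; exact this haS
    · intro J hJ
      simp only [Finset.mem_filter] at hJ
      rw [← Finset.prod_sdiff hJ.2, mul_comm]
  rw [hbij, ← Finset.mul_sum]
  congr 1
  have := Finset.prod_add lam (fun _ => (1:ℝ)) Sᶜ
  simp only [Finset.prod_const_one, mul_one] at this
  rw [this]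

theorem stmt_10 {N : ℕ} (L : Matrix (Fin N) (Fin N) ℝ)
    (lam : Fin N → ℝ) (v : Fin N → Fin N → ℝ)
    (horth : ∀ m n, v m ⬝ᵥ v n = if m = n then (1 : ℝ) else 0)
    (hlam : ∀ n, 0 ≤ lam n)
    (hLdecomp : L = ∑ n, lam n • vecMulVec (v n) (v n))
    (A : Finset (Fin N)) :
    principalMinor (L * (L + 1)⁻¹) A =
      (1 / (L + 1).det) *
        ∑ J : Finset (Fin N),
          (∏ n ∈ J, lam n) *
            principalMinor (∑ n ∈ J, vecMulVec (v n) (v n)) A := by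
  classical
  set V : Matrix (Fin N) (Fin N) ℝ := Matrix.of v with hV
  have hVVt : V * Vᵀ = 1 := by
    ext m n
    simpa [hV, Matrix.mul_apply, Matrix.one_apply, dotProduct] using horth m n
  have hne : ∀ n, lam n + 1 ≠ 0 := fun n => by
    have := hlam n; intro h; linarith
  have key : ∀ d e : Fin N → ℝ,
      (Vᵀ * Matrix.diagonal d * V) * (Vᵀ * Matrix.diagonal e * V)
        = Vᵀ * Matrix.diagonal (fun n => d n * e n) * V := by
    intro d e
    have h1 : V * (Vᵀ * (Matrix.diagonal e * V)) = Matrix.diagonal e * V := by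
      rw [← Matrix.mul_assoc, hVVt, Matrix.one_mul]
    simp only [Matrix.mul_assoc, h1]
    rw [← Matrix.diagonal_mul_diagonal, Matrix.mul_assoc (Matrix.diagonal d) (Matrix.diagonal e) V]
  have hL : L = Vᵀ * Matrix.diagonal lam * V := by rw [hLdecomp, ← conj]
  have hL1 : L + 1 = Vᵀ * Matrix.diagonal (fun n => lam n + 1) * V := by
    have hd : (Matrix.diagonal (fun n => lam n + 1) : Matrix (Fin N) (Fin N) ℝ)
        = Matrix.diagonal lam + 1 := by
      rw [← Matrix.diagonal_one, Matrix.diagonal_add]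
    have hVtV : Vᵀ * V = 1 := mul_eq_one_comm.mp hVVt
    rw [hd, Matrix.mul_add, Matrix.add_mul, Matrix.mul_one, hVtV, hL]
  have hdetV : V.det * V.det = 1 := by
    have := congrArg Matrix.det hVVt
    rwa [Matrix.det_mul, Matrix.det_transpose, Matrix.det_one] at this
  have hdet : (L + 1).det = ∏ n, (lam n + 1) := by
    rw [hL1, Matrix.det_mul, Matrix.det_mul, Matrix.det_transpose,
      Matrix.det_diagonal, mul_right_comm, hdetV, one_mul]
  have hinv : (L + 1)⁻¹ = Vᵀ * Matrix.diagonal (fun n => (lam n + 1)⁻¹) * V := by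
    apply Matrix.inv_eq_right_inv
    rw [hL1, key]
    have : (fun n => (lam n + 1) * (lam n + 1)⁻¹) = fun _ => (1:ℝ) := by
      funext n; exact mul_inv_cancel₀ (hne n)
    rw [this, Matrix.diagonal_one, Matrix.mul_one, mul_eq_one_comm.mp hVVt]
  have hK : L * (L + 1)⁻¹
      = ∑ n, (lam n * (lam n + 1)⁻¹) • vecMulVec (v n) (v n) := by
    rw [hinv, hL, key, conj]
  -- rewrite the RHS minors
  have hJ : ∀ J : Finset (Fin N),
      principalMinor (∑ n ∈ J, vecMulVec (v n) (v n)) A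
        = ∑ S : Finset (Fin N), (if S ⊆ J then (1:ℝ) else 0) * dcoef v A S := by
    intro J
    have : (∑ n ∈ J, vecMulVec (v n) (v n))
        = ∑ n, (if n ∈ J then (1:ℝ) else 0) • vecMulVec (v n) (v n) := by
      simp [ite_smul, Finset.sum_ite_mem]
    rw [this, expand]
    refine Finset.sum_congr rfl fun S _ => ?_
    congr 1
    by_cases h : S ⊆ J
    · rw [if_pos h]
      exact Finset.prod_eq_one fun n hn => by rw [if_pos (h hn)]
    · rw [if_neg h]
      obtain ⟨n, hnS, hnJ⟩ := Finset.not_subset.mp h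
      exact Finset.prod_eq_zero hnS (by rw [if_neg hnJ])
  rw [hK, expand, hdet]
  simp_rw [hJ]
  have hRHS : ∑ J : Finset (Fin N), (∏ n ∈ J, lam n) *
        ∑ S : Finset (Fin N), (if S ⊆ J then (1:ℝ) else 0) * dcoef v A S
      = ∑ S : Finset (Fin N),
          ((∏ n ∈ S, lam n) * ∏ n ∈ Sᶜ, (lam n + 1)) * dcoef v A S := by
    simp_rw [Finset.mul_sum]
    rw [Finset.sum_comm]
    refine Finset.sum_congr rfl fun S _ => ?_
    rw [← sum_supersets lam S, Finset.sum_mul]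
    refine Finset.sum_congr rfl fun J _ => ?_
    by_cases h : S ⊆ J <;> simp [h]
  rw [hRHS, Finset.mul_sum]
  refine Finset.sum_congr rfl fun S _ => ?_
  have hP : (∏ n, (lam n + 1)) = (∏ n ∈ S, (lam n + 1)) * ∏ n ∈ Sᶜ, (lam n + 1) :=
    (Finset.prod_mul_prod_compl S _).symm
  have h1 : (∏ n ∈ S, (lam n + 1)) ≠ 0 := Finset.prod_ne_zero_iff.mpr fun n _ => hne n
  have h2 : (∏ n ∈ Sᶜ, (lam n + 1)) ≠ 0 := Finset.prod_ne_zero_iff.mpr fun n _ => hne n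
  have hmu : ∏ n ∈ S, (lam n * (lam n + 1)⁻¹)
      = (∏ n ∈ S, lam n) * (∏ n ∈ S, (lam n + 1))⁻¹ := by
    rw [Finset.prod_mul_distrib, ← Finset.prod_inv_distrib]
  rw [hmu, hP]
  field_simp
end

section
/- The log-likelihood of an L-ensemble is log-submodular: for a positive semidefinite matrix L and sets Y ⊆ Y' ⊆ {1,...,N} with i ∉ Y', we have det(L_{Y∪{i}})·det(L_{Y'}) ≥ det(L_{Y'∪{i}})·det(L_Y). -/
open Matrix BigOperators

lemma posDef_submatrix_inj {n m : Type*} [Fintype n] [Fintype m] [DecidableEq n] [DecidableEq m]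
    {M : Matrix n n ℝ} (hM : M.PosDef) {e : m → n} (he : Function.Injective e) :
    (M.submatrix e e).PosDef := by
  refine posDef_iff_dotProduct_mulVec.mpr ⟨hM.isHermitian.submatrix e, fun x hx => ?_⟩
  set y : n → ℝ := Function.extend e x 0 with hy
  have hye : ∀ mm, y (e mm) = x mm := fun mm => he.extend_apply x 0 mm
  have hy0 : y ≠ 0 := by
    intro h
    apply hx
    funext mm
    have := congrFun h (e mm)
    rwa [hye] at this
  have key : ∀ g : n → ℝ, ∑ nn, y nn * g nn = ∑ mm, x mm * g (e mm) := by
    intro g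
    have himg : ∑ nn ∈ Finset.univ.image e, y nn * g nn = ∑ mm, x mm * g (e mm) := by
      rw [Finset.sum_image (fun a _ b _ h => he h)]
      exact Finset.sum_congr rfl fun mm _ => by rw [hye]
    rw [← himg]
    refine (Finset.sum_subset (Finset.subset_univ _) fun nn _ hnn => ?_).symm
    have hne : ¬ ∃ mm, e mm = nn := by
      intro ⟨mm, hmm⟩
      exact hnn (Finset.mem_image.mpr ⟨mm, Finset.mem_univ _, hmm⟩)
    rw [hy, Function.extend_apply' _ _ _ hne]
    simp
  have hmain : dotProduct (star x) ((M.submatrix e e) *ᵥ x) = dotProduct (star y) (M *ᵥ y) := by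
    simp only [star_trivial, dotProduct, mulVec, Matrix.submatrix_apply]
    rw [key fun nn => ∑ nn', M nn nn' * y nn']
    refine Finset.sum_congr rfl fun mm _ => ?_
    congr 1
    have : ∑ nn', M (e mm) nn' * y nn' = ∑ nn', y nn' * M (e mm) nn' :=
      Finset.sum_congr rfl fun _ _ => mul_comm _ _
    rw [this, key fun nn' => M (e mm) nn']
    exact Finset.sum_congr rfl fun _ _ => mul_comm _ _
  rw [hmain]
  exact hM.dotProduct_mulVec_pos hy0

section Aug

variable {N : ℕ} {κ : Type} [Fintype κ] [DecidableEq κ]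

/-- Equivalence between `↥A ⊕ κ` and the union of `A` with the image of an injective `g`. -/
noncomputable def augEquiv (A : Finset (Fin N)) (g : κ → Fin N)
    (hg : Function.Injective g) (hgA : ∀ k, g k ∉ A) :
    (↥A ⊕ κ) ≃ ↥(A ∪ Finset.image g Finset.univ) where
  toFun := Sum.elim (fun a => ⟨a.1, Finset.mem_union_left _ a.2⟩)
    (fun k => ⟨g k, Finset.mem_union_right _ (Finset.mem_image_of_mem g (Finset.mem_univ k))⟩)
  invFun := fun x => if h : x.1 ∈ A then Sum.inl ⟨x.1, h⟩ else
    Sum.inr (Finset.choose (fun k => g k = x.1) Finset.univ (by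
      have hx := x.2
      rw [Finset.mem_union] at hx
      rcases hx with h' | h'
      · exact absurd h' h
      · rw [Finset.mem_image] at h'
        obtain ⟨k, -, hk⟩ := h'
        exact ⟨k, ⟨Finset.mem_univ _, hk⟩, fun k' hk' => hg (hk'.2.trans hk.symm)⟩))
  left_inv := by
    rintro (a | k)
    · simp only [Sum.elim_inl]
      exact dif_pos a.2
    · simp only [Sum.elim_inr]
      refine (dif_neg (hgA k)).trans ?_
      congr 1
      exact hg (Finset.choose_property (fun k' => g k' = g k) Finset.univ _)
  right_inv := by
    rintro ⟨x, hx⟩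
    by_cases h : x ∈ A
    · simp only [dif_pos h, Sum.elim_inl]
    · simp only [dif_neg h, Sum.elim_inr]
      exact Subtype.ext (Finset.choose_property (fun k' => g k' = x) Finset.univ _)

end Aug

lemma pm_aug {N : ℕ} (L : Matrix (Fin N) (Fin N) ℝ) (hL : L.PosDef)
    (A : Finset (Fin N)) {κ : Type} [Fintype κ] [DecidableEq κ]
    (g : κ → Fin N) (hg : Function.Injective g) (hgA : ∀ k, g k ∉ A) :
    principalMinor L (A ∪ Finset.image g Finset.univ) =
      principalMinor L A *
        (Matrix.of fun k l : κ => L (g k) (g l) -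
          (fun a : ↥A => L (g k) a.1) ⬝ᵥ
            ((L.submatrix (fun a : ↥A => (a : Fin N)) (fun a : ↥A => (a : Fin N)))⁻¹ *ᵥ
              (fun a : ↥A => L a.1 (g l)))).det := by
  classical
  have hAA : (L.submatrix (fun a : ↥A => (a : Fin N)) (fun a : ↥A => (a : Fin N))).PosDef :=
    posDef_submatrix_inj hL Subtype.val_injective
  haveI : Invertible (L.submatrix (fun a : ↥A => (a : Fin N)) (fun a : ↥A => (a : Fin N))) :=
    hAA.isUnit.invertible
  unfold principalMinor
  rw [← Matrix.det_submatrix_equiv_self (augEquiv A g hg hgA), Matrix.submatrix_submatrix]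
  have h2 : L.submatrix
      ((fun a : ↥(A ∪ Finset.image g Finset.univ) => (a : Fin N)) ∘ ⇑(augEquiv A g hg hgA))
      ((fun a : ↥(A ∪ Finset.image g Finset.univ) => (a : Fin N)) ∘ ⇑(augEquiv A g hg hgA)) =
      Matrix.fromBlocks (L.submatrix (fun a : ↥A => (a : Fin N)) (fun a : ↥A => (a : Fin N)))
        (Matrix.of fun (a : ↥A) k => L a.1 (g k))
        (Matrix.of fun k (a : ↥A) => L (g k) a.1) (Matrix.of fun k l => L (g k) (g l)) := by
    ext (a | k) (b | l) <;> rfl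
  rw [h2, Matrix.det_fromBlocks₁₁, invOf_eq_nonsing_inv]
  congr 1
  congr 1
  ext k l
  simp only [Matrix.sub_apply, Matrix.of_apply, Matrix.mul_apply, Matrix.mulVec,
    dotProduct, Finset.sum_mul, Finset.mul_sum]
  congr 1
  rw [Finset.sum_comm]
  exact Finset.sum_congr rfl fun a _ => Finset.sum_congr rfl fun b _ => by ring

noncomputable def schurQ {N : ℕ} (L : Matrix (Fin N) (Fin N) ℝ) (A : Finset (Fin N))
    (x y : Fin N) : ℝ :=
  L x y - (fun a : ↥A => L x a.1) ⬝ᵥ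
    ((L.submatrix (fun a : ↥A => (a : Fin N)) (fun a : ↥A => (a : Fin N)))⁻¹ *ᵥ
      (fun a : ↥A => L a.1 y))

lemma pm_insert_one {N : ℕ} (L : Matrix (Fin N) (Fin N) ℝ) (hL : L.PosDef)
    (A : Finset (Fin N)) (i : Fin N) (hi : i ∉ A) :
    principalMinor L (insert i A) = principalMinor L A * schurQ L A i i := by
  have h := pm_aug L hL A (fun _ : Unit => i) (fun a b _ => Subsingleton.elim a b) (fun _ => hi)
  have himg : A ∪ Finset.image (fun _ : Unit => i) Finset.univ = insert i A := by
    ext x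
    simp [or_comm]
  rw [himg, Matrix.det_unique] at h
  exact h

lemma pm_insert_two {N : ℕ} (L : Matrix (Fin N) (Fin N) ℝ) (hL : L.PosDef)
    (A : Finset (Fin N)) (i j : Fin N) (hi : i ∉ A) (hj : j ∉ A) (hij : i ≠ j) :
    principalMinor L (insert j (insert i A)) =
      principalMinor L A *
        (schurQ L A i i * schurQ L A j j - schurQ L A i j * schurQ L A j i) := by
  have hg : Function.Injective ![i, j] := by
    intro a b hab
    fin_cases a <;> fin_cases b <;> simp_all
  have hgA : ∀ k, ![i, j] k ∉ A := by
    intro k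
    fin_cases k <;> simpa
  have h := pm_aug L hL A ![i, j] hg hgA
  have himg : A ∪ Finset.image ![i, j] Finset.univ = insert j (insert i A) := by
    ext x
    simp only [Finset.mem_union, Finset.mem_image, Finset.mem_univ, true_and,
      Fin.exists_fin_two, Finset.mem_insert, Matrix.cons_val_zero, Matrix.cons_val_one,
      Matrix.head_cons, eq_comm (b := x)]
    tauto
  rw [himg, Matrix.det_fin_two] at h
  exact h

lemma schurQ_symm {N : ℕ} (L : Matrix (Fin N) (Fin N) ℝ) (hL : L.PosDef)
    (A : Finset (Fin N)) (x y : Fin N) : schurQ L A x y = schurQ L A y x := by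
  have hsym : ∀ u v, L u v = L v u := by
    intro u v
    have h := hL.isHermitian
    rw [Matrix.IsHermitian] at h
    conv_lhs => rw [← h]
    simp [Matrix.conjTranspose_apply]
  have hAA : (L.submatrix (fun a : ↥A => (a : Fin N)) (fun a : ↥A => (a : Fin N))).PosDef :=
    posDef_submatrix_inj hL Subtype.val_injective
  have hinv : ∀ a b : ↥A,
      (L.submatrix (fun a : ↥A => (a : Fin N)) (fun a : ↥A => (a : Fin N)))⁻¹ a b =
      (L.submatrix (fun a : ↥A => (a : Fin N)) (fun a : ↥A => (a : Fin N)))⁻¹ b a := by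
    intro a b
    have h := hAA.inv.isHermitian
    rw [Matrix.IsHermitian] at h
    conv_lhs => rw [← h]
    simp [Matrix.conjTranspose_apply]
  unfold schurQ
  rw [hsym x y]
  congr 1
  simp only [dotProduct, Matrix.mulVec, Finset.mul_sum]
  rw [Finset.sum_comm]
  exact Finset.sum_congr rfl fun b _ => Finset.sum_congr rfl fun a _ => by
    rw [hsym x a.1, hsym b.1 y, hinv a b]; ring

lemma pm_pos {N : ℕ} (L : Matrix (Fin N) (Fin N) ℝ) (hL : L.PosDef) (A : Finset (Fin N)) :
    0 < principalMinor L A :=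
  (posDef_submatrix_inj hL Subtype.val_injective).det_pos

lemma step_ineq {N : ℕ} (L : Matrix (Fin N) (Fin N) ℝ) (hL : L.PosDef)
    (A : Finset (Fin N)) (i j : Fin N) (hi : i ∉ A) (hj : j ∉ A) (hij : i ≠ j) :
    principalMinor L (insert j (insert i A)) * principalMinor L A ≤
      principalMinor L (insert i A) * principalMinor L (insert j A) := by
  rw [pm_insert_two L hL A i j hi hj hij, pm_insert_one L hL A i hi, pm_insert_one L hL A j hj,
    schurQ_symm L hL A i j]
  nlinarith [sq_nonneg (principalMinor L A * schurQ L A j i)]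

lemma pd_main {N : ℕ} (L : Matrix (Fin N) (Fin N) ℝ) (hL : L.PosDef) :
    ∀ (n : ℕ) (Y Y' : Finset (Fin N)), (Y' \ Y).card = n → Y ⊆ Y' → ∀ i ∉ Y',
      principalMinor L (insert i Y') * principalMinor L Y ≤
        principalMinor L (insert i Y) * principalMinor L Y' := by
  intro n
  induction n with
  | zero =>
    intro Y Y' hcard hsub i _
    have hYY : Y' = Y :=
      (Finset.sdiff_eq_empty_iff_subset.mp (Finset.card_eq_zero.mp hcard)).antisymm hsub
    rw [hYY]
  | succ n ih =>
    intro Y Y' hcard hsub i hi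
    obtain ⟨j, hj⟩ : (Y' \ Y).Nonempty := Finset.card_pos.mp (by omega)
    have hjY' : j ∈ Y' := (Finset.mem_sdiff.mp hj).1
    have hjY : j ∉ Y := (Finset.mem_sdiff.mp hj).2
    have hiY : i ∉ Y := fun h => hi (hsub h)
    have hij : i ≠ j := fun h => hi (h ▸ hjY')
    have hsub2 : insert j Y ⊆ Y' := Finset.insert_subset hjY' hsub
    have hcard2 : (Y' \ insert j Y).card = n := by
      rw [Finset.sdiff_insert, Finset.card_erase_of_mem hj, hcard]
      omega
    have hiY2 : i ∉ insert j Y := by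
      rw [Finset.mem_insert]
      rintro (h | h)
      · exact hij h
      · exact hiY h
    have h1 := ih (insert j Y) Y' hcard2 hsub2 i hi
    have h2 := step_ineq L hL Y i j hiY hjY hij
    rw [Finset.insert_comm] at h2
    have hbc : 0 < principalMinor L (insert j Y) * principalMinor L (insert i (insert j Y)) :=
      mul_pos (pm_pos L hL _) (pm_pos L hL _)
    refine le_of_mul_le_mul_right ?_ hbc
    calc principalMinor L (insert i Y') * principalMinor L Y *
          (principalMinor L (insert j Y) * principalMinor L (insert i (insert j Y)))
        = (principalMinor L (insert i Y') * principalMinor L (insert j Y)) *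
          (principalMinor L (insert i (insert j Y)) * principalMinor L Y) := by ring
      _ ≤ (principalMinor L (insert i (insert j Y)) * principalMinor L Y') *
          (principalMinor L (insert i Y) * principalMinor L (insert j Y)) := by
          exact mul_le_mul h1 h2 (mul_pos (pm_pos L hL _) (pm_pos L hL _)).le
            (mul_pos (pm_pos L hL _) (pm_pos L hL _)).le
      _ = principalMinor L (insert i Y) * principalMinor L Y' *
          (principalMinor L (insert j Y) * principalMinor L (insert i (insert j Y))) := by ring

open Filter Topology

theorem stmt_12 {N : ℕ} (L : Matrix (Fin N) (Fin N) ℝ) (hL : L.PosSemidef)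
    (Y Y' : Finset (Fin N)) (hYY' : Y ⊆ Y') (i : Fin N) (hi : i ∉ Y') :
    principalMinor L (insert i Y') * principalMinor L Y ≤
      principalMinor L (insert i Y) * principalMinor L Y' := by
  set F : ℝ → ℝ := fun ε =>
    principalMinor (L + ε • 1) (insert i Y) * principalMinor (L + ε • 1) Y' -
      principalMinor (L + ε • 1) (insert i Y') * principalMinor (L + ε • 1) Y with hF
  have hcontA : ∀ A : Finset (Fin N), Continuous fun ε : ℝ => principalMinor (L + ε • 1) A := by
    intro A
    unfold principalMinor
    apply Continuous.matrix_det
    apply continuous_matrix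
    intro a b
    simp only [Matrix.submatrix_apply, Matrix.add_apply, Matrix.smul_apply, smul_eq_mul]
    fun_prop
  have hcont : Continuous F := by
    exact ((hcontA _).mul (hcontA _)).sub ((hcontA _).mul (hcontA _))
  have hpos : ∀ ε ∈ Set.Ioi (0 : ℝ), 0 ≤ F ε := by
    intro ε hε
    have hone : ((ε : ℝ) • (1 : Matrix (Fin N) (Fin N) ℝ)).PosDef := by
      rw [Matrix.smul_one_eq_diagonal]
      exact Matrix.PosDef.diagonal fun _ => hε
    have hPD : (L + ε • 1).PosDef := Matrix.PosDef.posSemidef_add hL hone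
    have h := pd_main (L + ε • 1) hPD ((Y' \ Y).card) Y Y' rfl hYY' i hi
    simp only [hF]
    linarith
  have htend : Tendsto F (𝓝[>] (0 : ℝ)) (𝓝 (F 0)) :=
    (hcont.tendsto 0).mono_left nhdsWithin_le_nhds
  have h0 : 0 ≤ F 0 :=
    ge_of_tendsto htend (eventually_nhdsWithin_of_forall hpos)
  have hL0 : L + (0 : ℝ) • 1 = L := by simp
  rw [hF] at h0
  simp only [hL0] at h0
  linarith
end

section
/- Alternative likelihood formula: for positive semidefinite L and K = L(L+I)^{-1}, the L-ensemble probability satisfies P_L(Y) = det(L_Y)/det(L+I) = det(I_Y K + I_{Ȳ}(I − K)), where I_Y and I_{Ȳ} are the diagonal 0/1 matrices supported on Y and its complement. -/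
open Matrix BigOperators

theorem stmt_14 {N : ℕ} (L : Matrix (Fin N) (Fin N) ℝ) (hL : L.PosSemidef)
    (Y : Finset (Fin N)) :
    principalMinor L Y / (L + 1).det =
      (Matrix.diagonal (fun i => if i ∈ Y then (1 : ℝ) else 0) * (L * (L + 1)⁻¹) +
        Matrix.diagonal (fun i => if i ∈ Y then (0 : ℝ) else 1) *
          (1 - L * (L + 1)⁻¹)).det := by
  have hpd : (L + 1).PosDef := Matrix.PosDef.posSemidef_add hL Matrix.PosDef.one
  have hdet : (L + 1).det ≠ 0 := hpd.det_pos.ne'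
  have hu : IsUnit (L + 1).det := hdet.isUnit
  have hmul : (L + 1) * (L + 1)⁻¹ = 1 := Matrix.mul_nonsing_inv _ hu
  have hK : (1 : Matrix (Fin N) (Fin N) ℝ) - L * (L + 1)⁻¹ = (L + 1)⁻¹ := by
    nth_rewrite 1 [← hmul]
    rw [← sub_mul, add_sub_cancel_left, one_mul]
  set DY := Matrix.diagonal (fun i : Fin N => if i ∈ Y then (1 : ℝ) else 0)
  set DC := Matrix.diagonal (fun i : Fin N => if i ∈ Y then (0 : ℝ) else 1)
  have hfact : DY * (L * (L + 1)⁻¹) + DC * (1 - L * (L + 1)⁻¹)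
      = (DY * L + DC) * (L + 1)⁻¹ := by
    rw [hK, add_mul, mul_assoc]
  have hminor : (DY * L + DC).det = principalMinor L Y := by
    classical
    let e := (Equiv.sumCompl (fun i : Fin N => i ∈ Y)).symm
    have := Matrix.det_submatrix_equiv_self e.symm (DY * L + DC)
    rw [← this]
    have hblock : (DY * L + DC).submatrix e.symm e.symm =
        Matrix.fromBlocks
          (L.submatrix (fun i : {x // x ∈ Y} => (i : Fin N)) (fun j : {x // x ∈ Y} => (j : Fin N)))
          (L.submatrix (fun i : {x // x ∈ Y} => (i : Fin N)) (fun j : {x // ¬ x ∈ Y} => (j : Fin N)))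
          0 1 := by
      ext i j
      cases i with
      | inl i =>
        cases j with
        | inl j => simp [e, DY, DC, Matrix.mul_apply, Matrix.add_apply, Matrix.diagonal, i.2, Equiv.sumCompl_apply_inl, Equiv.sumCompl_apply_inr]
        | inr j => simp [e, DY, DC, Matrix.mul_apply, Matrix.add_apply, Matrix.diagonal, i.2, Equiv.sumCompl_apply_inl, Equiv.sumCompl_apply_inr]
      | inr i =>
        cases j with
        | inl j =>
          have hne : ¬ (i : Fin N) = j := fun h => i.2 (h ▸ j.2)
          simp [e, DY, DC, Matrix.mul_apply, Matrix.add_apply, Matrix.diagonal, i.2, hne,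
            Matrix.one_apply, Equiv.sumCompl_apply_inl, Equiv.sumCompl_apply_inr]
        | inr j => simp [e, DY, DC, Matrix.mul_apply, Matrix.add_apply, Matrix.diagonal, i.2,
            Matrix.one_apply, Subtype.ext_iff, Equiv.sumCompl_apply_inl, Equiv.sumCompl_apply_inr]
    rw [hblock, Matrix.det_fromBlocks_zero₂₁]
    simp [principalMinor]
  rw [hfact, Matrix.det_mul, Matrix.det_nonsing_inv, hminor, div_eq_mul_inv]
  congr 1
  simp [Ring.inverse_eq_inv']
end

section
/- The uniform distribution over k-element subsets of an N-element set is not a determinantal point process for 2 ≤ k ≤ N−2: there is no symmetric matrix K with 0 ⪯ K ⪯ I such that det(K_A) equals the marginal probability under the uniform k-subset distribution for all A. -/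
open Matrix BigOperators

lemma minor_image {N m : ℕ} (K : Matrix (Fin N) (Fin N) ℝ) (f : Fin m → Fin N)
    (hf : Function.Injective f) :
    principalMinor K (Finset.image f Finset.univ) = (K.submatrix f f).det := by
  set A := Finset.image f Finset.univ with hA
  let e : Fin m ≃ A :=
    (Equiv.ofInjective f hf).trans (Equiv.subtypeEquivRight (by
      intro x
      simp [hA, Set.mem_range, Finset.mem_image]))
  have h1 : ((K.submatrix (fun i : A => (i : Fin N)) (fun j : A => (j : Fin N))).submatrix
      e e).det = (K.submatrix (fun i : A => (i : Fin N)) (fun j : A => (j : Fin N))).det :=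
    Matrix.det_submatrix_equiv_self e _
  have h2 : (K.submatrix (fun i : A => (i : Fin N)) (fun j : A => (j : Fin N))).submatrix e e
      = K.submatrix f f := by
    ext i j
    simp [e, Matrix.submatrix_apply, Equiv.subtypeEquivRight]
    rfl
  rw [principalMinor, ← h1, h2]

lemma count_subsets {N k : ℕ} (A : Finset (Fin N)) (hA : A.card ≤ k) :
    ((Finset.powersetCard k (Finset.univ : Finset (Fin N))).filter
        (fun Y => A ⊆ Y)).card = (N - A.card).choose (k - A.card) := by
  have key : ((Finset.powersetCard k (Finset.univ : Finset (Fin N))).filter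
      (fun Y => A ⊆ Y)).card
      = (Finset.powersetCard (k - A.card) ((Finset.univ : Finset (Fin N)) \ A)).card := by
    apply Finset.card_bij' (fun Y _ => Y \ A) (fun B _ => A ∪ B)
    · intro Y hY
      simp only [Finset.mem_filter, Finset.mem_powersetCard] at hY
      obtain ⟨⟨_, hcard⟩, hsub⟩ := hY
      simp only [Finset.mem_powersetCard]
      constructor
      · exact Finset.sdiff_subset_sdiff (Finset.subset_univ Y) le_rfl
      · rw [Finset.card_sdiff_of_subset hsub, hcard]
    · intro B hB
      simp only [Finset.mem_powersetCard] at hB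
      obtain ⟨hsub, hcard⟩ := hB
      have hdisj : Disjoint A B := Finset.disjoint_sdiff.mono_right hsub
      simp only [Finset.mem_filter, Finset.mem_powersetCard]
      refine ⟨⟨Finset.subset_univ _, ?_⟩, Finset.subset_union_left⟩
      rw [Finset.card_union_of_disjoint hdisj, hcard]
      omega
    · intro Y hY
      simp only [Finset.mem_filter] at hY
      exact Finset.union_sdiff_of_subset hY.2
    · intro B hB
      simp only [Finset.mem_powersetCard] at hB
      have hdisj : Disjoint A B := Finset.disjoint_sdiff.mono_right hB.1
      rw [Finset.union_sdiff_cancel_left hdisj]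
  rw [key, Finset.card_powersetCard, Finset.card_sdiff_of_subset (Finset.subset_univ A),
    Finset.card_univ, Fintype.card_fin]

lemma count_subsets_zero {N k : ℕ} (A : Finset (Fin N)) (hA : k < A.card) :
    ((Finset.powersetCard k (Finset.univ : Finset (Fin N))).filter
        (fun Y => A ⊆ Y)).card = 0 := by
  rw [Finset.card_eq_zero]
  apply Finset.filter_false_of_mem
  intro Y hY
  simp only [Finset.mem_powersetCard] at hY
  intro hsub
  have := Finset.card_le_card hsub
  omega


lemma img1 {N : ℕ} (i : Fin N) : Finset.image ![i] Finset.univ = {i} := by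
  ext x
  simp [Fin.exists_fin_one, eq_comm]

lemma img2 {N : ℕ} (i j : Fin N) : Finset.image ![i, j] Finset.univ = {i, j} := by
  ext x
  simp [Fin.exists_fin_two, eq_comm]

lemma img3 {N : ℕ} (i j l : Fin N) :
    Finset.image ![i, j, l] Finset.univ = {i, j, l} := by
  ext x
  constructor
  · intro hx
    simp only [Finset.mem_image, Finset.mem_univ, true_and] at hx
    obtain ⟨a, ha⟩ := hx
    fin_cases a <;> simp_all
  · intro hx
    simp only [Finset.mem_insert, Finset.mem_singleton] at hx
    simp only [Finset.mem_image, Finset.mem_univ, true_and]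
    rcases hx with h | h | h
    · exact ⟨0, by simp [h]⟩
    · exact ⟨1, by simp [h]⟩
    · exact ⟨2, by simp [h]⟩

lemma minor_single {N : ℕ} (K : Matrix (Fin N) (Fin N) ℝ) (i : Fin N) :
    principalMinor K {i} = K i i := by
  rw [← img1 i, minor_image K ![i] (Function.injective_of_subsingleton _),
    Matrix.det_fin_one]
  simp

lemma minor_pair {N : ℕ} (K : Matrix (Fin N) (Fin N) ℝ) (i j : Fin N) (hij : i ≠ j) :
    principalMinor K {i, j} = K i i * K j j - K i j * K j i := by
  have hinj : Function.Injective ![i, j] := by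
    intro a b hab
    fin_cases a <;> fin_cases b <;> simp_all
  rw [← img2 i j, minor_image K ![i, j] hinj, Matrix.det_fin_two]
  simp

lemma minor_triple {N : ℕ} (K : Matrix (Fin N) (Fin N) ℝ) (i j l : Fin N)
    (hij : i ≠ j) (hil : i ≠ l) (hjl : j ≠ l) :
    principalMinor K {i, j, l} =
      K i i * K j j * K l l - K i i * K j l * K l j
      - K i j * K j i * K l l + K i j * K j l * K l i
      + K i l * K j i * K l j - K i l * K j j * K l i := by
  have hinj : Function.Injective ![i, j, l] := by
    intro a b hab
    fin_cases a <;> fin_cases b <;> simp_all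
  rw [← img3 i j l, minor_image K ![i, j, l] hinj, Matrix.det_fin_three]
  simp

set_option maxHeartbeats 1000000 in
theorem stmt_18 {N k : ℕ} (hk2 : 2 ≤ k) (hkN : k ≤ N - 2) :
    ¬ ∃ K : Matrix (Fin N) (Fin N) ℝ,
      K.IsSymm ∧ K.PosSemidef ∧ (1 - K).PosSemidef ∧
      ∀ A : Finset (Fin N),
        principalMinor K A =
          (((Finset.powersetCard k (Finset.univ : Finset (Fin N))).filter
              (fun Y => A ⊆ Y)).card : ℝ) / (N.choose k : ℝ) := by
  rintro ⟨K, hsymm, -, -, hK⟩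
  have hN4 : 4 ≤ N := by omega
  have hkN' : k + 2 ≤ N := by omega
  -- three distinct indices
  set i0 : Fin N := ⟨0, by omega⟩
  set i1 : Fin N := ⟨1, by omega⟩
  set i2 : Fin N := ⟨2, by omega⟩
  have h01 : i0 ≠ i1 := by simp [i0, i1, Fin.ext_iff]
  have h02 : i0 ≠ i2 := by simp [i0, i2, Fin.ext_iff]
  have h12 : i1 ≠ i2 := by simp [i1, i2, Fin.ext_iff]
  -- real casts
  set n : ℝ := (N : ℝ) with hn
  set m : ℝ := (k : ℝ) with hm
  have hmn : m + 2 ≤ n := by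
    rw [hn, hm]; exact_mod_cast hkN'
  have hm2 : (2:ℝ) ≤ m := by rw [hm]; exact_mod_cast hk2
  have hn0 : (0:ℝ) < n := by positivity
  have hC : (0:ℝ) < (N.choose k : ℝ) := by
    have := Nat.choose_pos (show k ≤ N by omega)
    exact_mod_cast this
  have hn4 : (4:ℝ) ≤ n := by rw [hn]; exact_mod_cast hN4
  have hC0 : (N.choose k : ℝ) ≠ 0 := ne_of_gt hC
  have hn0' : n ≠ 0 := by linarith
  have hn1' : n - 1 ≠ 0 := by linarith
  have hn2' : n - 2 ≠ 0 := by linarith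
  -- cast identities for binomial ratios
  have hnat1 : N * (N-1).choose (k-1) = N.choose k * k := by
    have h := Nat.add_one_mul_choose_eq (N-1) (k-1)
    rwa [show N-1+1 = N by omega, show k-1+1 = k by omega] at h
  have hnat2 : (N-1) * (N-2).choose (k-2) = (N-1).choose (k-1) * (k-1) := by
    have h := Nat.add_one_mul_choose_eq (N-2) (k-2)
    rwa [show N-2+1 = N-1 by omega, show k-2+1 = k-1 by omega] at h
  have hq1 : ((N-1).choose (k-1) : ℝ) = (N.choose k : ℝ) * m / n := by
    have := congrArg (fun t : ℕ => (t : ℝ)) hnat1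
    push_cast at this
    field_simp
    linarith [this]
  have hq2 : ((N-2).choose (k-2) : ℝ) = (N.choose k : ℝ) * (m * (m-1)) / (n * (n-1)) := by
    have h2 := congrArg (fun t : ℕ => (t : ℝ)) hnat2
    push_cast [Nat.cast_sub (show 1 ≤ N by omega), Nat.cast_sub (show 2 ≤ N by omega),
      Nat.cast_sub (show 1 ≤ k by omega), Nat.cast_sub (show 2 ≤ k by omega)] at h2
    rw [hq1] at h2
    field_simp at h2 ⊢
    nlinarith [h2]
  have hq3 : 3 ≤ k → ((N-3).choose (k-3) : ℝ) * (N.choose k : ℝ)⁻¹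
      = m * (m-1) * (m-2) / (n * (n-1) * (n-2)) := by
    intro hk3
    ·
      have hnat3 : (N-2) * (N-3).choose (k-3) = (N-2).choose (k-2) * (k-2) := by
        have h := Nat.add_one_mul_choose_eq (N-3) (k-3)
        rwa [show N-3+1 = N-2 by omega, show k-3+1 = k-2 by omega] at h
      have h3 := congrArg (fun t : ℕ => (t : ℝ)) hnat3
      push_cast [Nat.cast_sub (show 2 ≤ N by omega), Nat.cast_sub (show 3 ≤ N by omega),
        Nat.cast_sub (show 2 ≤ k by omega), Nat.cast_sub (show 3 ≤ k by omega)] at h3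
      rw [hq2] at h3
      field_simp at h3 ⊢
      nlinarith [h3]
  -- marginals
  have hsing : ∀ i : Fin N, K i i = m / n := by
    intro i
    have h := hK {i}
    rw [minor_single, count_subsets _ (by simp; omega)] at h
    simp only [Finset.card_singleton] at h
    rw [h, hq1]
    field_simp
  have hpair : ∀ i j : Fin N, i ≠ j →
      K i i * K j j - K i j * K j i = m * (m-1) / (n * (n-1)) := by
    intro i j hij
    have h := hK {i, j}
    rw [minor_pair K i j hij, count_subsets _ (by rw [Finset.card_pair hij]; omega)] at h
    rw [Finset.card_pair hij] at h
    rw [h, hq2]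
    field_simp
  -- abbreviations
  set a : ℝ := m / n with ha_def
  set q2 : ℝ := m * (m-1) / (n * (n-1)) with hq2_def
  set q3 : ℝ := m * (m-1) * (m-2) / (n * (n-1) * (n-2)) with hq3_def
  set x : ℝ := K i0 i1 with hx_def
  set y : ℝ := K i1 i2 with hy_def
  set z : ℝ := K i0 i2 with hz_def
  have hs01 : K i1 i0 = x := hsymm.apply i0 i1
  have hs12 : K i2 i1 = y := hsymm.apply i1 i2
  have hs02 : K i2 i0 = z := hsymm.apply i0 i2
  -- triple marginal
  have htrip : a*a*a - a*y*y - x*x*a + x*y*z + z*x*y - z*a*z = q3 := by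
    have h := hK {i0, i1, i2}
    have hcard : ({i0, i1, i2} : Finset (Fin N)).card = 3 := by
      rw [Finset.card_insert_of_notMem (by simp [h01, h02]), Finset.card_pair h12]
    rw [minor_triple K i0 i1 i2 h01 h02 h12] at h
    rw [hsing i0, hsing i1, hsing i2, hs01, hs12, hs02] at h
    rcases Nat.lt_or_ge k 3 with hk3 | hk3
    · rw [count_subsets_zero _ (by rw [hcard]; omega)] at h
      have hk2' : k = 2 := by omega
      have hm2' : m = 2 := by rw [hm]; exact_mod_cast hk2'
      rw [h, hq3_def, hm2']
      push_cast
      ring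
    · rw [count_subsets _ (by rw [hcard]; omega), hcard] at h
      rw [div_eq_mul_inv] at h
      rw [h, hq3 hk3, hq3_def]
  have Hx : x * x = a^2 - q2 := by
    have h := hpair i0 i1 h01
    rw [hsing i0, hsing i1, hs01] at h
    linear_combination -h
  have Hy : y * y = a^2 - q2 := by
    have h := hpair i1 i2 h12
    rw [hsing i1, hsing i2, hs12] at h
    linear_combination -h
  have Hz : z * z = a^2 - q2 := by
    have h := hpair i0 i2 h02
    rw [hsing i0, hsing i2, hs02] at h
    linear_combination -h
  have hxyz : 2 * (x * (y * z)) = q3 - a^3 + 3 * a * (a^2 - q2) := by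
    linear_combination htrip + a * Hx + a * Hy + a * Hz
  have Hsq : (q3 - a^3 + 3 * a * (a^2 - q2))^2 = 4 * (a^2 - q2)^3 := by
    linear_combination (-(q3 - a^3 + 3*a*(a^2-q2)) - 2*(x*(y*z))) * hxyz
      + (4*(y*y)*(z*z)) * Hx + (4*(a^2-q2)*(z*z)) * Hy + (4*(a^2-q2)^2) * Hz
  have key : 4 * (a^2 - q2)^3 - (q3 - a^3 + 3 * a * (a^2 - q2))^2
      = 4 * (m^2 * (n-m)^2 * ((m-1) * (n-m-1))) / (n^4 * (n-1)^3 * (n-2)^2) := by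
    rw [ha_def, hq2_def, hq3_def]
    field_simp
    ring
  rw [Hsq, sub_self] at key
  have hpos : 0 < 4 * (m^2 * (n-m)^2 * ((m-1) * (n-m-1))) / (n^4 * (n-1)^3 * (n-2)^2) := by
    apply div_pos
    · have h1 : 0 < m := by linarith
      have h2 : 0 < n - m := by linarith
      have h3 : 0 < m - 1 := by linarith
      have h4 : 0 < n - m - 1 := by linarith
      positivity
    · have h5 : 0 < n - 1 := by linarith
      have h6 : 0 < n - 2 := by linarith
      positivity
  rw [← key] at hpos
  exact lt_irrefl 0 hpos
end
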